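/- Let G be a strongly connected digraph with a fixed start vertex s, let (x,y) be an edge inserted into G, and let z = nca(x,y) be the nearest common ancestor of x and y in the dominator tree D of G_s. A vertex v ≠ s is affected by the insertion if and only if depth(z) < depth(d(v)) and there is a path π in G from y to v such that depth(d(v)) < depth(w) for every vertex w on π. Moreover, if v is affected, then the immediate dominator of v in (G+(x,y))_s equals z. -/

import Mathlib

/-!  Basic notions for finite directed graphs given by an edge set `E : Set (V × V)`. -/

variable {V : Type*}

/-- A path from `u` to `v`: a nonempty list of vertices starting at `u`, ending at `v`,
in which every pair of consecutive vertices is an edge. -/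
def IsPath (E : Set (V × V)) (u v : V) (p : List V) : Prop :=
  p.Chain' (fun a b => (a, b) ∈ E) ∧ p.head? = some u ∧ p.getLast? = some v

/-- `v` is reachable from `u` by a path. -/
def Reach (E : Set (V × V)) (u v : V) : Prop := ∃ p, IsPath E u v p

/-- Every vertex reaches every other vertex. -/
def StronglyConnected (E : Set (V × V)) : Prop := ∀ u v, Reach E u v

/-- An edge `e` is a strong bridge if its removal destroys strong connectivity. -/
def StrongBridge (E : Set (V × V)) (e : V × V) : Prop :=
  e ∈ E ∧ ¬ StronglyConnected (E \ {e})

/-- `u` dominates `v` in the flow graph with start vertex `s`: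
every path from `s` to `v` contains `u`. -/
def Dominates (E : Set (V × V)) (s u v : V) : Prop :=
  ∀ p, IsPath E s v p → u ∈ p

/-- An edge `e = (e.1, e.2)` is a bridge of the flow graph `G_s`:
every path from `s` to `e.2` contains the edge `e`. -/
def FlowBridge (E : Set (V × V)) (s : V) (e : V × V) : Prop :=
  e ∈ E ∧ ∀ p, IsPath E s e.2 p → [e.1, e.2] <:+: p

/-- The reverse digraph: all edges reversed. -/
def rev (E : Set (V × V)) : Set (V × V) := {e | (e.2, e.1) ∈ E}

/-- `D(v)`: the set of vertices dominated by `v` in `G_s`. -/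
def Dset (E : Set (V × V)) (s v : V) : Set V := {w | Dominates E s v w}

/-- Reachability inside the induced subgraph `G[S]`: a path all of whose vertices lie in `S`. -/
def ReachableIn (E : Set (V × V)) (S : Set V) (u v : V) : Prop :=
  ∃ p, IsPath E u v p ∧ ∀ w ∈ p, w ∈ S

/-- `C` is a strongly connected component of the induced subgraph `G[S]`. -/
def SCCIn (E : Set (V × V)) (S : Set V) (C : Set V) : Prop :=
  C.Nonempty ∧ C ⊆ S ∧
  (∀ u ∈ C, ∀ v ∈ C, ReachableIn E S u v) ∧
  (∀ v ∈ S, ∀ u ∈ C, ReachableIn E S u v → ReachableIn E S v u → v ∈ C)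

/-- A bridge-dominated component: an SCC of `G[D(v)]` for some bridge `(u,v)` of `G_s`. -/
def BridgeDomComponent (E : Set (V × V)) (s : V) (C : Set V) : Prop :=
  ∃ u v, FlowBridge E s (u, v) ∧ SCCIn E (Dset E s v) C

/-- The set of edges used by a path `p`. -/
def pathEdges (p : List V) : Set (V × V) := {e | [e.1, e.2] <:+: p}

/-- `u` and `v` are `2`-edge-connected: there are two edge-disjoint paths from `u` to `v`
and two edge-disjoint paths from `v` to `u`. -/
def TwoEdgeConnected (E : Set (V × V)) (u v : V) : Prop :=
  (∃ p q, IsPath E u v p ∧ IsPath E u v q ∧ pathEdges p ∩ pathEdges q = ∅) ∧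
  (∃ p q, IsPath E v u p ∧ IsPath E v u q ∧ pathEdges p ∩ pathEdges q = ∅)

/-- `u` is the immediate dominator of `v` in `G_s`: a proper dominator of `v`
dominated by every proper dominator of `v`. -/
def ImmDom (E : Set (V × V)) (s u v : V) : Prop :=
  Dominates E s u v ∧ u ≠ v ∧
  ∀ w, Dominates E s w v → w ≠ v → Dominates E s w u

/-- `depth v = |Dom(v)|`, the number of dominators of `v` in `G_s`. -/
noncomputable def depth (E : Set (V × V)) (s v : V) : ℕ :=
  {u | Dominates E s u v}.ncard

/-- `z` is the nearest common ancestor of `x` and `y` in the dominator tree of `G_s`: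
a common dominator of `x` and `y` dominated by every common dominator. -/
def IsNCA (E : Set (V × V)) (s x y z : V) : Prop :=
  Dominates E s z x ∧ Dominates E s z y ∧
  ∀ w, Dominates E s w x → Dominates E s w y → Dominates E s w z

/-- `r` is the bridge-decomposition root of `v` in `G_s`: the deepest dominator `r`
of `v` such that `r = s` or `(d(r), r)` is a bridge of `G_s`. -/
def IsBDRoot (E : Set (V × V)) (s v r : V) : Prop :=
  Dominates E s r v ∧
  (r = s ∨ ∃ u, ImmDom E s u r ∧ FlowBridge E s (u, r)) ∧
  ∀ r', Dominates E s r' v →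
    (r' = s ∨ ∃ u', ImmDom E s u' r' ∧ FlowBridge E s (u', r')) →
    Dominates E s r' r

namespace Stmt6Aux

variable {E : Set (V × V)} {s u v w m x y z : V}

lemma path_ne_nil {p : List V} (h : IsPath E u v p) : p ≠ [] := by
  rintro rfl; simp [IsPath] at h

lemma start_mem {p : List V} (h : IsPath E u v p) : u ∈ p :=
  List.mem_of_mem_head? (by rw [h.2.1]; rfl)

lemma end_mem {p : List V} (h : IsPath E u v p) : v ∈ p :=
  List.mem_of_mem_getLast? (by rw [h.2.2]; rfl)

lemma path_mono {E' : Set (V × V)} (hE : E ⊆ E') {p : List V} (h : IsPath E u v p) :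
    IsPath E' u v p :=
  ⟨h.1.imp (fun _ _ hab => hE hab), h.2⟩

lemma head?_append_cons (a : List V) (c : V) (l : List V) :
    (a ++ c :: l).head? = (a ++ [c]).head? := by
  cases a <;> simp

/-- Concatenation of paths, membership form. -/
lemma path_trans {p q : List V} (hp : IsPath E u m p) (hq : IsPath E m v q) :
    ∃ r, IsPath E u v r ∧ ∀ w ∈ r, w ∈ p ∨ w ∈ q := by
  obtain ⟨hqc, hqh, hql⟩ := hq
  cases q with
  | nil => simp at hqh
  | cons b t =>
    have hb : b = m := by simpa using hqh
    rw [hb] at hqc hql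
    refine ⟨p ++ t, ⟨?_, ?_, ?_⟩, ?_⟩
    · refine List.IsChain.append hp.1 (hqc.tail) ?_
      intro a ha c hc
      rw [hp.2.2] at ha
      have ha' : a = m := by simpa using ha.symm
      rw [ha']
      exact (List.isChain_cons.mp hqc).1 c hc
    · rw [List.head?_append_of_ne_nil _ (path_ne_nil hp)]
      exact hp.2.1
    · cases t with
      | nil =>
        have : v = m := by simpa using hql.symm
        simpa [this] using hp.2.2
      | cons d t' =>
        rw [List.getLast?_append_of_ne_nil _ (by simp)]
        simpa using hql
    · intro w hw
      rcases List.mem_append.mp hw with h | h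
      · exact Or.inl h
      · exact Or.inr (by simp [h])

/-- Extend a path by one edge. -/
lemma path_snoc {p : List V} (hp : IsPath E u m p) (he : (m, w) ∈ E) :
    IsPath E u w (p ++ [w]) := by
  refine ⟨?_, ?_, List.getLast?_concat⟩
  · refine List.IsChain.append hp.1 (by simp) ?_
    intro a ha c hc
    rw [hp.2.2] at ha
    have : a = m := by simpa using ha.symm
    have hc' : c = w := by simpa using hc.symm
    rw [this, hc']; exact he
  · rw [List.head?_append_of_ne_nil _ (path_ne_nil hp)]
    exact hp.2.1

lemma mem_split_last {p : List V} (h : m ∈ p) :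
    ∃ a b, p = a ++ m :: b ∧ m ∉ b := by
  induction p with
  | nil => simp at h
  | cons c t ih =>
    by_cases hm : m ∈ t
    · obtain ⟨a, b, rfl, hb⟩ := ih hm
      exact ⟨c :: a, b, rfl, hb⟩
    · have hcm : c = m := by
        rcases List.mem_cons.mp h with h' | h'
        · exact h'.symm
        · exact absurd h' hm
      exact ⟨[], t, by simp [hcm], hm⟩

lemma mem_split_first {p : List V} (h : m ∈ p) :
    ∃ a b, p = a ++ m :: b ∧ m ∉ a := by
  induction p with
  | nil => simp at h
  | cons c t ih =>
    by_cases hc : c = m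
    · exact ⟨[], t, by simp [hc], by simp⟩
    · have hm : m ∈ t := by
        rcases List.mem_cons.mp h with h' | h'
        · exact absurd h'.symm hc
        · exact h'
      obtain ⟨a, b, rfl, ha⟩ := ih hm
      refine ⟨c :: a, b, rfl, ?_⟩
      simp only [List.mem_cons]
      rintro (h' | h')
      · exact hc h'.symm
      · exact ha h'

/-- Splitting a path at an occurrence of `m`. -/
lemma path_of_split {p a b : List V} (h : IsPath E u v p) (hp : p = a ++ m :: b) :
    IsPath E u m (a ++ [m]) ∧ IsPath E m v (m :: b) := by
  obtain ⟨hc, hh, hl⟩ := h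
  subst hp
  have hsplit : a ++ m :: b = (a ++ [m]) ++ b := by simp
  rw [hsplit] at hc
  obtain ⟨hc1, hc2, hlink⟩ := List.isChain_append.mp hc
  constructor
  · refine ⟨hc1, ?_, List.getLast?_concat⟩
    rw [← head?_append_cons a m b]; exact hh
  · refine ⟨?_, rfl, ?_⟩
    · apply List.isChain_cons.mpr
      refine ⟨?_, hc2⟩
      intro h hh'
      exact hlink m (by simp [List.getLast?_concat]) h hh'
    · rw [← List.getLast?_append_cons a m b]; exact hl


/-! ### Domination theory -/

lemma dom_self : Dominates E s v v := fun _ hp => end_mem hp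

lemma dom_start : Dominates E s s v := fun _ hp => start_mem hp

lemma dom_trans (h1 : Dominates E s u m) (h2 : Dominates E s m v) :
    Dominates E s u v := by
  intro p hp
  have hm : m ∈ p := h2 p hp
  obtain ⟨a, b, rfl, -⟩ := mem_split_first hm
  have hpre := (path_of_split hp rfl).1
  have := h1 _ hpre
  rcases List.mem_append.mp this with h | h
  · exact List.mem_append.mpr (Or.inl h)
  · have : u = m := by simpa using h
    simp [this]

lemma dom_antisymm (hr : Reach E s u) (h1 : Dominates E s u w) (h2 : Dominates E s w u)
    (key : True) : u = w := by
  by_contra hne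
  obtain ⟨p, hp⟩ := hr
  -- strong induction on the length of a path from s to u
  have main : ∀ n, ∀ q : List V, q.length ≤ n → IsPath E s u q → False := by
    intro n
    induction n with
    | zero => intro q hq hq'; have := path_ne_nil hq'; cases q <;> simp_all
    | succ n ih =>
      intro q hq hq'
      have hwq : w ∈ q := h2 q hq'
      obtain ⟨a, b, rfl, hwa⟩ := mem_split_first hwq
      have hpre := (path_of_split hq' rfl).1
      have hu : u ∈ a ++ [w] := h1 _ hpre
      have hua : u ∈ a := by
        rcases List.mem_append.mp hu with h | h
        · exact h
        · exact absurd (by simpa using h) hne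
      obtain ⟨c, d, rfl, -⟩ := mem_split_first hua
      have hpre2 := (path_of_split hpre (show c ++ u :: d ++ [w] = c ++ u :: (d ++ [w]) by simp)).1
      -- (c ++ [u]) is a path from s to u, strictly shorter than q
      refine ih (c ++ [u]) ?_ hpre2
      have hlen1 : (c ++ u :: d ++ w :: b).length = c.length + d.length + b.length + 2 := by
        simp [List.length_append]
        omega
      have hlen2 : (c ++ [u]).length = c.length + 1 := by simp
      omega
  exact main p.length p p.length.le_refl hp

lemma dom_total (hu : Dominates E s u v) (hw : Dominates E s w v)
    (ht : Reach E s v) : Dominates E s u w ∨ Dominates E s w u := by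
  by_cases huw : u = w
  · subst huw; exact Or.inl dom_self
  obtain ⟨t, htp⟩ := ht
  have hwt : w ∈ t := hw t htp
  obtain ⟨a, b, rfl, hwb⟩ := mem_split_last hwt
  have hsuf := (path_of_split htp rfl).2
  by_cases hub : u ∈ b
  · -- w dominates u
    right
    obtain ⟨c, d, hbd, hud⟩ := mem_split_last hub
    have hsuf2 : IsPath E u v (u :: d) := by
      have : w :: b = (w :: c) ++ u :: d := by simp [hbd]
      exact (path_of_split hsuf this).2
    intro r hr
    obtain ⟨r', hr', hmem⟩ := path_trans hr hsuf2
    have hwr' : w ∈ r' := hw r' hr'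
    rcases hmem w hwr' with h | h
    · exact h
    · exfalso
      rcases List.mem_cons.mp h with h' | h'
      · exact huw h'.symm
      · exact hwb (by simp [hbd, h'])
  · -- u dominates w
    left
    intro r hr
    obtain ⟨r', hr', hmem⟩ := path_trans hr hsuf
    have hur' : u ∈ r' := hu r' hr'
    rcases hmem u hur' with h | h
    · exact h
    · exfalso
      rcases List.mem_cons.mp h with h' | h'
      · exact huw h'
      · exact hub h'

lemma dom_finite (ht : Reach E s v) : {w | Dominates E s w v}.Finite := by
  obtain ⟨p, hp⟩ := ht
  exact Set.Finite.subset p.finite_toSet (fun w hw => hw p hp)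

lemma dom_mono (h : Dominates E s u w) :
    {a | Dominates E s a u} ⊆ {a | Dominates E s a w} :=
  fun _ ha => dom_trans ha h

lemma depth_le (h : Dominates E s u w) (ht : Reach E s w) :
    depth E s u ≤ depth E s w :=
  Set.ncard_le_ncard (dom_mono h) (dom_finite ht)

lemma depth_lt (hru : Reach E s u) (hrw : Reach E s w)
    (h : Dominates E s u w) (hne : u ≠ w) : depth E s u < depth E s w := by
  refine Set.ncard_lt_ncard ?_ (dom_finite hrw)
  refine ⟨dom_mono h, fun hsub => ?_⟩
  have hwu : Dominates E s w u := hsub dom_self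
  exact hne (dom_antisymm hru h hwu trivial)

lemma imm_dom_exists (hSC : StronglyConnected E) (hv : v ≠ s) :
    ∃ d, ImmDom E s d v := by
  set S : Set V := {w | Dominates E s w v ∧ w ≠ v} with hS
  have hfin : S.Finite := Set.Finite.subset (dom_finite (hSC s v)) (fun w hw => hw.1)
  have hne : S.Nonempty := ⟨s, dom_start, fun h => hv h.symm⟩
  obtain ⟨d, hd, hmax'⟩ := Set.exists_max_image S (depth E s) hfin hne
  have hmax : ∀ a ∈ S, depth E s d ≤ depth E s a → depth E s d = depth E s a :=
    fun a ha h => le_antisymm h (hmax' a ha)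
  refine ⟨d, hd.1, hd.2, ?_⟩
  intro w hwv hwvne
  rcases dom_total hwv hd.1 (hSC s v) with h | h
  · exact h
  · by_cases hdw : d = w
    · subst hdw; exact dom_self
    · exfalso
      have hlt : depth E s d < depth E s w := depth_lt (hSC s d) (hSC s w) h hdw
      have hle : depth E s w ≤ depth E s d := by
        by_contra hcon
        push_neg at hcon
        exact absurd (hmax w ⟨hwv, hwvne⟩ (le_of_lt hcon)) (by omega)
      omega

lemma imm_dom_unique (hSC : StronglyConnected E) (h1 : ImmDom E s u v)
    (h2 : ImmDom E s w v) : u = w :=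
  dom_antisymm (hSC s u) (h2.2.2 u h1.1 h1.2.1) (h1.2.2 w h2.1 h2.2.1) trivial


/-! ### Insertion of an edge -/

/-- First use of the inserted edge: decomposition with an `E`-chain prefix ending at `x`. -/
lemma chain_split_first {p : List V}
    (h' : p.Chain' (fun a b => (a, b) ∈ insert (x, y) E))
    (h : ¬ p.Chain' (fun a b => (a, b) ∈ E)) :
    ∃ a b, p = a ++ x :: y :: b ∧ (a ++ [x]).Chain' (fun a b => (a, b) ∈ E) := by
  induction p with
  | nil => exact absurd List.isChain_nil h
  | cons c t ih =>
    cases t with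
    | nil => exact absurd (List.isChain_singleton c) h
    | cons d t' =>
      obtain ⟨hcd, hrest⟩ := List.isChain_cons_cons.mp h'
      by_cases hcdE : (c, d) ∈ E
      · have hrestE : ¬ (d :: t').Chain' (fun a b => (a, b) ∈ E) := by
          intro hcon
          exact h (List.isChain_cons_cons.mpr ⟨hcdE, hcon⟩)
        obtain ⟨a, b, heq, hchain⟩ := ih hrest hrestE
        refine ⟨c :: a, b, by rw [heq]; rfl, ?_⟩
        show List.Chain' (fun a b => (a, b) ∈ E) (c :: (a ++ [x]))
        apply List.isChain_cons.mpr
        refine ⟨?_, hchain⟩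
        intro e he
        have hd : (a ++ [x]).head? = some d := by
          have h0 := congrArg List.head? heq
          rw [head?_append_cons a x (y :: b)] at h0
          exact h0.symm
        rw [hd, Option.mem_some_iff] at he
        rw [← he]; exact hcdE
      · have hxy : c = x ∧ d = y := by
          rcases Set.mem_insert_iff.mp hcd with h1 | h1
          · exact ⟨congrArg Prod.fst h1, congrArg Prod.snd h1⟩
          · exact absurd h1 hcdE
        exact ⟨[], t', by rw [hxy.1, hxy.2]; rfl, List.isChain_singleton x⟩

/-- Last use of the inserted edge: decomposition with an `E`-chain suffix starting at `y`. -/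
lemma chain_split_last {p : List V}
    (h' : p.Chain' (fun a b => (a, b) ∈ insert (x, y) E))
    (h : ¬ p.Chain' (fun a b => (a, b) ∈ E)) :
    ∃ a b, p = a ++ x :: y :: b ∧ (y :: b).Chain' (fun a b => (a, b) ∈ E) := by
  induction p with
  | nil => exact absurd List.isChain_nil h
  | cons c t ih =>
    cases t with
    | nil => exact absurd (List.isChain_singleton c) h
    | cons d t' =>
      obtain ⟨hcd, hrest⟩ := List.isChain_cons_cons.mp h'
      by_cases hrestE : (d :: t').Chain' (fun a b => (a, b) ∈ E)
      · have hcdE : (c, d) ∉ E := by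
          intro hcon
          exact h (List.isChain_cons_cons.mpr ⟨hcon, hrestE⟩)
        have hxy : c = x ∧ d = y := by
          rcases Set.mem_insert_iff.mp hcd with h1 | h1
          · exact ⟨congrArg Prod.fst h1, congrArg Prod.snd h1⟩
          · exact absurd h1 hcdE
        refine ⟨[], t', by rw [hxy.1, hxy.2]; rfl, ?_⟩
        rw [← hxy.2]; exact hrestE
      · obtain ⟨a, b, heq, hchain⟩ := ih hrest hrestE
        exact ⟨c :: a, b, by rw [heq]; rfl, hchain⟩

/-- If `w` dominates `u` and dominates `x` in `E`, it still dominates `u` after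
inserting the edge `(x, y)`. -/
lemma dominates_insert (hu : Dominates E s w u) (hx : Dominates E s w x) :
    Dominates (insert (x, y) E) s w u := by
  rintro p ⟨hc, hh, hl⟩
  by_cases hC : p.Chain' (fun a b => (a, b) ∈ E)
  · exact hu p ⟨hC, hh, hl⟩
  · obtain ⟨a, b, rfl, hchain⟩ := chain_split_first hc hC
    have hpath : IsPath E s x (a ++ [x]) := by
      refine ⟨hchain, ?_, List.getLast?_concat⟩
      rw [head?_append_cons a x (y :: b)] at hh
      exact hh
    have hwmem : w ∈ a ++ [x] := hx _ hpath
    rcases List.mem_append.mp hwmem with h | h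
    · exact List.mem_append.mpr (Or.inl h)
    · have : w = x := by simpa using h
      simp [this]

lemma dominates_of_insert (h : Dominates (insert (x, y) E) s u v) :
    Dominates E s u v :=
  fun p hp => h p (path_mono (Set.subset_insert _ _) hp)


lemma not_dom (h : ¬ Dominates E s u v) : ∃ p, IsPath E s v p ∧ u ∉ p := by
  unfold Dominates at h
  push_neg at h
  exact h

/-! ### The two directions of the main theorem -/

lemma backward {dv : V} (hSC : StronglyConnected E) (hz : IsNCA E s x y z)
    (hdv : ImmDom E s dv v) (hdepth : depth E s z < depth E s dv)
    (p : List V) (hp : IsPath E y v p) (hdeep : ∀ w ∈ p, depth E s dv < depth E s w) :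
    ¬ Dominates (insert (x, y) E) s dv v := by
  have hsub : E ⊆ insert (x, y) E := Set.subset_insert _ _
  have hdvp : dv ∉ p := fun h => lt_irrefl _ (hdeep dv h)
  have hnot_both : ¬ (Dominates E s dv x ∧ Dominates E s dv y) := by
    rintro ⟨h1, h2⟩
    have h3 : Dominates E s dv z := hz.2.2 dv h1 h2
    have h4 : depth E s dv ≤ depth E s z := depth_le h3 (hSC s z)
    omega
  by_cases hy : Dominates E s dv y
  · have hx : ¬ Dominates E s dv x := fun h => hnot_both ⟨h, hy⟩
    obtain ⟨q, hq, hdvq⟩ := not_dom hx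
    have hq' : IsPath (insert (x, y) E) s x q := path_mono hsub hq
    have hqy : IsPath (insert (x, y) E) s y (q ++ [y]) :=
      path_snoc hq' (Set.mem_insert _ _)
    have hp' : IsPath (insert (x, y) E) y v p := path_mono hsub hp
    obtain ⟨r, hr, hmem⟩ := path_trans hqy hp'
    intro hcon
    rcases hmem dv (hcon r hr) with h | h
    · rcases List.mem_append.mp h with h1 | h1
      · exact hdvq h1
      · have : dv = y := by simpa using h1
        exact hdvp (this ▸ start_mem hp)
    · exact hdvp h
  · obtain ⟨q, hq, hdvq⟩ := not_dom hy
    obtain ⟨r, hr, hmem⟩ := path_trans hq hp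
    intro hcon
    rcases hmem dv (hcon r (path_mono hsub hr)) with h | h
    · exact hdvq h
    · exact hdvp h

lemma forward {dv : V} (hSC : StronglyConnected E) (hv : v ≠ s) (hz : IsNCA E s x y z)
    (hdv : ImmDom E s dv v) (hNot : ¬ ImmDom (insert (x, y) E) s dv v) :
    (depth E s z < depth E s dv ∧
      ∃ p, IsPath E y v p ∧ ∀ w ∈ p, depth E s dv < depth E s w) ∧
    ImmDom (insert (x, y) E) s z v := by
  have hsub : E ⊆ insert (x, y) E := Set.subset_insert _ _
  have hSC' : StronglyConnected (insert (x, y) E) := by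
    intro a b
    obtain ⟨p, hp⟩ := hSC a b
    exact ⟨p, path_mono hsub hp⟩
  -- Step 1: `dv` no longer dominates `v` after the insertion.
  have hdom' : ¬ Dominates (insert (x, y) E) s dv v := by
    by_contra hdom'
    obtain ⟨d', hd'⟩ := imm_dom_exists hSC' hv
    have h1 : Dominates (insert (x, y) E) s dv d' := hd'.2.2 dv hdom' hdv.2.1
    have h2 : Dominates E s d' v := dominates_of_insert hd'.1
    have h3 : Dominates E s d' dv := hdv.2.2 d' h2 hd'.2.1
    have h4 : Dominates E s dv d' := dominates_of_insert h1
    have h5 : d' = dv := dom_antisymm (hSC s d') h3 h4 trivial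
    exact hNot (h5 ▸ hd')
  -- Step 2: decompose a witness path.
  obtain ⟨P, hP, hdvP⟩ := not_dom hdom'
  have hPC : ¬ P.Chain' (fun a b => (a, b) ∈ E) := by
    intro hc
    exact hdvP (hdv.1 P ⟨hc, hP.2.1, hP.2.2⟩)
  obtain ⟨a, b, hPeq, hychain⟩ := chain_split_last hP.1 hPC
  have hβ : IsPath E y v (y :: b) := by
    refine ⟨hychain, rfl, ?_⟩
    have h0 := hP.2.2
    rw [hPeq, List.getLast?_append_cons, List.getLast?_cons_cons] at h0
    exact h0
  have hdvβ : dv ∉ y :: b := by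
    intro h
    apply hdvP
    rw [hPeq]
    exact List.mem_append.mpr (Or.inr (List.mem_cons.mpr (Or.inr h)))
  obtain ⟨a', b', hPeq', hxchain⟩ := chain_split_first hP.1 hPC
  have hα : IsPath E s x (a' ++ [x]) := by
    refine ⟨hxchain, ?_, List.getLast?_concat⟩
    have h0 := hP.2.1
    rw [hPeq', head?_append_cons a' x (y :: b')] at h0
    exact h0
  have hdvα : dv ∉ a' ++ [x] := by
    intro h
    apply hdvP
    rw [hPeq']
    rcases List.mem_append.mp h with h1 | h1
    · exact List.mem_append.mpr (Or.inl h1)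
    · have : dv = x := by simpa using h1
      exact List.mem_append.mpr (Or.inr (List.mem_cons.mpr (Or.inl this)))
  have hndx : ¬ Dominates E s dv x := fun h => hdvα (h _ hα)
  -- Step 3: `dv` dominates `y` in the old graph.
  have hdvy : Dominates E s dv y := by
    by_contra hcon
    obtain ⟨q, hq, hdvq⟩ := not_dom hcon
    obtain ⟨r, hr, hmem⟩ := path_trans hq hβ
    rcases hmem dv (hdv.1 r hr) with h | h
    · exact hdvq h
    · exact hdvβ h
  -- Step 4: `z` properly dominates `dv`.
  have hzdv : Dominates E s z dv := by
    rcases dom_total hz.2.1 hdvy (hSC s y) with h | h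
    · exact h
    · exact absurd (dom_trans h hz.1) hndx
  have hzne : z ≠ dv := fun h => hndx (h ▸ hz.1)
  have hdlt : depth E s z < depth E s dv :=
    depth_lt (hSC s z) (hSC s dv) hzdv hzne
  -- Step 5: every vertex of the suffix path is properly dominated by `dv`.
  have hdeepβ : ∀ w ∈ y :: b, Dominates E s dv w ∧ dv ≠ w := by
    intro w hw
    have hnew : dv ≠ w := fun h => hdvβ (h ▸ hw)
    refine ⟨?_, hnew⟩
    by_contra hcon
    obtain ⟨q, hq, hdvq⟩ := not_dom hcon
    obtain ⟨c, d, hbd, -⟩ := mem_split_last hw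
    have hsuf := (path_of_split hβ hbd).2
    obtain ⟨r, hr, hmem⟩ := path_trans hq hsuf
    rcases hmem dv (hdv.1 r hr) with h | h
    · exact hdvq h
    · apply hdvβ
      rw [hbd]
      exact List.mem_append.mpr (Or.inr h)
  have hdeep : ∀ w ∈ y :: b, depth E s dv < depth E s w := fun w hw =>
    depth_lt (hSC s dv) (hSC s w) (hdeepβ w hw).1 (hdeepβ w hw).2
  refine ⟨⟨hdlt, y :: b, hβ, hdeep⟩, ?_⟩
  -- Step 6: `z` is the new immediate dominator of `v`.
  have hzv : Dominates E s z v := dom_trans hzdv hdv.1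
  have hzv' : Dominates (insert (x, y) E) s z v := dominates_insert hzv hz.1
  have hznev : z ≠ v := by
    intro h
    apply hzne
    exact dom_antisymm (hSC s z) hzdv (h ▸ hdv.1) trivial
  refine ⟨hzv', hznev, ?_⟩
  intro w hw' hwv
  have hw : Dominates E s w v := dominates_of_insert hw'
  have hwdv : Dominates E s w dv := hdv.2.2 w hw hwv
  have hwx : Dominates E s w x := by
    by_contra hcon
    obtain ⟨q, hq, hwq⟩ := not_dom hcon
    have hq' : IsPath (insert (x, y) E) s x q := path_mono hsub hq
    have hqy : IsPath (insert (x, y) E) s y (q ++ [y]) :=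
      path_snoc hq' (Set.mem_insert _ _)
    have hβ' : IsPath (insert (x, y) E) y v (y :: b) := path_mono hsub hβ
    obtain ⟨r, hr, hmem⟩ := path_trans hqy hβ'
    have hwβ : w ∈ y :: b := by
      rcases hmem w (hw' r hr) with h | h
      · rcases List.mem_append.mp h with h1 | h1
        · exact absurd h1 hwq
        · have : w = y := by simpa using h1
          rw [this]
          exact List.mem_cons_self
      · exact h
    have h5 := hdeepβ w hwβ
    exact h5.2 (dom_antisymm (hSC s dv) h5.1 hwdv trivial)
  have hwy : Dominates E s w y := dom_trans hwdv hdvy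
  have hwz : Dominates E s w z := hz.2.2 w hwx hwy
  exact dominates_insert hwz hwx

end Stmt6Aux

/-- a vertex `v ≠ s` with immediate dominator `dv` is affected by the
insertion of `(x,y)` (its immediate dominator changes) iff `depth z < depth dv`
and there is a path in `G` from `y` to `v` all of whose vertices are deeper than
`dv`; moreover, if `v` is affected then its new immediate dominator is `z = nca(x,y)`. -/
theorem stmt6 {V : Type*} (E : Set (V × V)) (s x y z v dv : V)
    (hSC : StronglyConnected E) (hv : v ≠ s)
    (hz : IsNCA E s x y z) (hdv : ImmDom E s dv v) :
    ((¬ ImmDom (insert (x, y) E) s dv v) ↔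
      (depth E s z < depth E s dv ∧
        ∃ p, IsPath E y v p ∧ ∀ w ∈ p, depth E s dv < depth E s w)) ∧
    (¬ ImmDom (insert (x, y) E) s dv v → ImmDom (insert (x, y) E) s z v) := by
  constructor
  · constructor
    · intro hNot
      exact (Stmt6Aux.forward hSC hv hz hdv hNot).1
    · rintro ⟨h1, p, hp, hdeep⟩ hImm
      exact Stmt6Aux.backward hSC hz hdv h1 p hp hdeep hImm.1
  · intro hNot
    exact (Stmt6Aux.forward hSC hv hz hdv hNot).2
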